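/- Let G be a finite group that is nilpotent of class at most 3 (i.e. every triple commutator ⁅⁅x,y⁆,z⁆ lies in the center Z(G)), and suppose 3 does not divide the order of G. Then the commutant of the associated gyrogroup equals the center of G: for a ∈ G, one has (a·x)^3 = a^3·x^3 for all x ∈ G if and only if a ∈ Z(G). -/

import Mathlib

open scoped commutatorElement

theorem commutant_eq_center_of_not_three_dvd_card {G : Type*} [Group G] [Fintype G]
    (h3 : ∀ x y z : G, ⁅⁅x, y⁆, z⁆ ∈ Subgroup.center G)
    (hcard : ¬ (3 ∣ Fintype.card G)) (a : G) :
    (∀ x : G, (a * x) ^ 3 = a ^ 3 * x ^ 3) ↔ a ∈ Subgroup.center G := by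
  constructor
  · intro h
    rw [Subgroup.mem_center_iff]
    intro x
    have K : ∀ y : G, y * a * y * a = a * a * (y * y) := by
      intro y
      have hy := h y
      rw [pow_three', pow_three', pow_three'] at hy
      have h1 : a * (y * a * y * a) * y = a * (a * a * (y * y)) * y := by
        calc a * (y * a * y * a) * y = a * y * (a * y) * (a * y) := by group
          _ = a * a * a * (y * y * y) := hy
          _ = a * (a * a * (y * y)) * y := by group
      exact mul_left_cancel (mul_right_cancel h1)
    set u := a⁻¹ * x * a * x⁻¹ with hu
    have E1 : (a⁻¹ * u * a) * u * x * u * x = x * x := by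
      calc (a⁻¹ * u * a) * u * x * u * x = a⁻¹ * a⁻¹ * (x * a * x * a) := by
            rw [hu]; group
        _ = a⁻¹ * a⁻¹ * (a * a * (x * x)) := by rw [K x]
        _ = x * x := by group
    have hcu : (a⁻¹ * u * a) * u = x * u⁻¹ * x⁻¹ := by
      calc (a⁻¹ * u * a) * u
          = ((a⁻¹ * u * a) * u * x * u * x) * (x⁻¹ * u⁻¹ * x⁻¹) := by group
        _ = x * x * (x⁻¹ * u⁻¹ * x⁻¹) := by rw [E1]
        _ = x * u⁻¹ * x⁻¹ := by group
    have E2 : (x * u⁻¹ * x⁻¹) * ((x * a) * u * (x * a)) = (x * a) * (x * a) := by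
      calc (x * u⁻¹ * x⁻¹) * ((x * a) * u * (x * a))
          = ((a⁻¹ * u * a) * u) * ((x * a) * u * (x * a)) := by rw [hcu]
        _ = a⁻¹ * a⁻¹ * ((x * a) * a * (x * a) * a) := by rw [hu]; group
        _ = a⁻¹ * a⁻¹ * (a * a * ((x * a) * (x * a))) := by rw [K (x * a)]
        _ = (x * a) * (x * a) := by group
    have hau' : u⁻¹ * a * u = a := by
      calc u⁻¹ * a * u
          = x⁻¹ * ((x * u⁻¹ * x⁻¹) * ((x * a) * u * (x * a))) * a⁻¹ * x⁻¹ := by group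
        _ = x⁻¹ * ((x * a) * (x * a)) * a⁻¹ * x⁻¹ := by rw [E2]
        _ = a := by group
    have hE1' : u * u * x * u * x = x * x := by
      have h2 : a * u = u * a := by
        calc a * u = u * (u⁻¹ * a * u) := by group
          _ = u * a := by rw [hau']
      have h1 : a⁻¹ * u * a = u := by
        calc a⁻¹ * u * a = a⁻¹ * (u * a) := by group
          _ = a⁻¹ * (a * u) := by rw [h2]
          _ = u := by group
      calc u * u * x * u * x = (a⁻¹ * u * a) * u * x * u * x := by rw [h1]
        _ = x * x := E1
    have hconj : x * u * x⁻¹ = u⁻¹ * u⁻¹ := by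
      calc x * u * x⁻¹ = (u⁻¹ * u⁻¹) * (u * u * x * u * x) * x⁻¹ * x⁻¹ := by group
        _ = (u⁻¹ * u⁻¹) * (x * x) * x⁻¹ * x⁻¹ := by rw [hE1']
        _ = u⁻¹ * u⁻¹ := by group
    have hcent : u * u * u ∈ Subgroup.center G := by
      have h0 := h3 x a⁻¹ x
      have h1 : ⁅⁅x, a⁻¹⁆, x⁆ = u⁻¹ * (x * u * x⁻¹) := by
        rw [hu]; simp only [commutatorElement_def]; group
      rw [h1, hconj] at h0
      have h2 := (Subgroup.center G).inv_mem h0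
      have h4 : (u⁻¹ * (u⁻¹ * u⁻¹))⁻¹ = u * u * u := by
        simp [mul_inv_rev, mul_assoc]
      rwa [h4] at h2
    have h6 : x * (u * u * u) * x⁻¹ = (u⁻¹ * u⁻¹) * ((u⁻¹ * u⁻¹) * (u⁻¹ * u⁻¹)) := by
      calc x * (u * u * u) * x⁻¹
          = (x * u * x⁻¹) * ((x * u * x⁻¹) * (x * u * x⁻¹)) := by group
        _ = (u⁻¹ * u⁻¹) * ((u⁻¹ * u⁻¹) * (u⁻¹ * u⁻¹)) := by rw [hconj]
    have h7 : x * (u * u * u) * x⁻¹ = u * u * u := by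
      have hcomm := Subgroup.mem_center_iff.mp hcent x
      calc x * (u * u * u) * x⁻¹ = (x * (u * u * u)) * x⁻¹ := by group
        _ = ((u * u * u) * x) * x⁻¹ := by rw [hcomm]
        _ = u * u * u := by group
    have h8 : u * u * u = (u⁻¹ * u⁻¹) * ((u⁻¹ * u⁻¹) * (u⁻¹ * u⁻¹)) := h7.symm.trans h6
    have h9 : u ^ 9 = 1 := by
      calc u ^ 9 = (u ^ 3) ^ 3 := by rw [show (9 : ℕ) = 3 * 3 from rfl, pow_mul]
        _ = (u * u * u) * (u * u * u) * (u * u * u) := by rw [pow_three', pow_three']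
        _ = (u * u * u) * (u * (u * (u * (u * (u * u))))) := by group
        _ = ((u⁻¹ * u⁻¹) * ((u⁻¹ * u⁻¹) * (u⁻¹ * u⁻¹))) * (u * (u * (u * (u * (u * u))))) := by
            rw [h8]
        _ = 1 := by group
    have hu9 : orderOf u ∣ 3 ^ 2 := by
      simpa using orderOf_dvd_of_pow_eq_one h9
    have hucard : orderOf u ∣ Fintype.card G := orderOf_dvd_card
    have hu1 : u = 1 := by
      rcases (Nat.dvd_prime_pow Nat.prime_three).mp hu9 with ⟨k, hk, hor⟩
      cases k with
      | zero => exact orderOf_eq_one_iff.mp (by simpa using hor)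
      | succ n =>
        exact absurd (dvd_trans (hor ▸ dvd_pow_self 3 n.succ_ne_zero) hucard) hcard
    have hufin : a⁻¹ * x * a * x⁻¹ = 1 := by rw [← hu]; exact hu1
    calc x * a = a * (a⁻¹ * x * a * x⁻¹) * x := by group
      _ = a * 1 * x := by rw [hufin]
      _ = a * x := by group
  · intro ha x
    have hc : Commute a x := (Subgroup.mem_center_iff.mp ha x).symm
    exact hc.mul_pow 3
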